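/- (Schur) If G is a group with G/Z(G) finite, then the commutator subgroup G' is finite. -/

import Mathlib

open scoped commutatorElement

lemma comm_central {G : Type*} [Group G] (g h z w : G)
    (hz : z ∈ Subgroup.center G) (hw : w ∈ Subgroup.center G) :
    ⁅g * z, h * w⁆ = ⁅g, h⁆ := by
  rw [Subgroup.mem_center_iff] at hz hw
  simp only [commutatorElement_def, mul_inv_rev]
  calc g * z * (h * w) * (z⁻¹ * g⁻¹) * (w⁻¹ * h⁻¹)
      = g * (z * h) * w * z⁻¹ * g⁻¹ * w⁻¹ * h⁻¹ := by group
    _ = g * (h * z) * w * z⁻¹ * g⁻¹ * w⁻¹ * h⁻¹ := by rw [← hz h]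
    _ = g * h * (z * w) * z⁻¹ * g⁻¹ * w⁻¹ * h⁻¹ := by group
    _ = g * h * (w * z) * z⁻¹ * g⁻¹ * w⁻¹ * h⁻¹ := by rw [← hz w]
    _ = g * h * (w * g⁻¹) * w⁻¹ * h⁻¹ := by group
    _ = g * h * (g⁻¹ * w) * w⁻¹ * h⁻¹ := by rw [← hw g⁻¹]
    _ = g * h * g⁻¹ * h⁻¹ := by group

/-- Schur's theorem: if `G/Z(G)` is finite then the commutator subgroup `G'` is finite. -/
theorem stmt15 {G : Type*} [Group G]
    (h : Finite (G ⧸ Subgroup.center G)) :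
    Finite (commutator G) := by
  have hfin : Finite (commutatorSet G) := by
    set Q := G ⧸ Subgroup.center G
    have hsub : commutatorSet G ⊆
        Set.range (fun p : Q × Q => ⁅p.1.out, p.2.out⁆) := by
      rintro x ⟨g, h, rfl⟩
      refine ⟨(↑g, ↑h), ?_⟩
      have hgmem : g⁻¹ * (↑g : Q).out ∈ Subgroup.center G :=
        QuotientGroup.eq.mp (QuotientGroup.out_eq' (↑g : Q)).symm
      have hhmem : h⁻¹ * (↑h : Q).out ∈ Subgroup.center G :=
        QuotientGroup.eq.mp (QuotientGroup.out_eq' (↑h : Q)).symm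
      have hg : (↑g : Q).out = g * (g⁻¹ * (↑g : Q).out) := by group
      have hh : (↑h : Q).out = h * (h⁻¹ * (↑h : Q).out) := by group
      simp only
      rw [hg, hh, comm_central g h _ _ hgmem hhmem]
    exact (Set.Finite.subset (Set.finite_range _) hsub).to_subtype
  infer_instance
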